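/- Let R be a discrete valuation ring with uniformizer π, and g_(1),...,g_(n) ∈ R[X] monic with 1 ≤ m_(1) ≤ ... ≤ m_(n), M = ∑ m_(k), Res(g_(1),...,g_(n)) ≠ 0, and g_(k)(X) ≡ X^{m_(k)} mod π for all k. Write e' := val_π(Res(g_(1),...,g_(n))) − ∑_{j∈[1,n−1]}((n−j)m_(j) − 1). Then: (a) for every y ∈ π^{e'} R^{1×M} there exists x ∈ R^{1×M} with x·A(g_(1),...,g_(n)) = y; (b) if u ≥ e' and x ∈ R^{1×M} satisfies x·A(g_(1),...,g_(n)) ∈ R^{1×M} π^u, then x ∈ R^{1×M} π^{u−e'}. -/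

import Mathlib

open Polynomial Finset

/-- The global column position of an index in the block-structured resultant matrix. -/
def resPos {n : ℕ} {m : Fin n → ℕ} (q : (k : Fin n) × Fin (m k)) : ℕ :=
  (∑ j ∈ Finset.univ.filter (fun j => j < q.1), m j) + (q.2 : ℕ)

/-- The matrix `A(g_(1), …, g_(n))` whose block of `deg g_(k)` rows consists of the
successively shifted coefficient rows of `∏_{j ≠ k} g_(j)`. -/
noncomputable def resMatrix {R : Type*} [CommRing R] {n : ℕ} (g : Fin n → Polynomial R) :
    Matrix ((k : Fin n) × Fin ((g k).natDegree)) ((k : Fin n) × Fin ((g k).natDegree)) R :=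
  fun p q =>
    if (p.2 : ℕ) ≤ resPos q then
      (∏ j ∈ Finset.univ.erase p.1, g j).coeff (resPos q - (p.2 : ℕ))
    else 0

/-- The generalized resultant `Res(g_(1), …, g_(n)) = det A(g_(1), …, g_(n))`. -/
noncomputable def genRes {R : Type*} [CommRing R] {n : ℕ} (g : Fin n → Polynomial R) : R :=
  (resMatrix g).det

lemma sum_mono_lower {n : ℕ} {m : Fin n → ℕ} (hm : Monotone m) :
    ∀ (c : ℕ) (T : Finset (Fin n)), c ≤ T.card →
    ∑ j ∈ univ.filter (fun j : Fin n => (j : ℕ) < c), m j ≤ ∑ j ∈ T, m j := by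
  intro c
  induction c with
  | zero => intro T _; simp
  | succ c ih =>
    intro T hT
    have hne : T.Nonempty := Finset.card_pos.mp (by omega)
    set a := T.max' hne with ha
    have hmem : a ∈ T := T.max'_mem hne
    have hcard_le : T.card ≤ (a : ℕ) + 1 := by
      have hsub : T.image (Fin.val) ⊆ Finset.range ((a : ℕ) + 1) := by
        intro x hx
        simp only [Finset.mem_image] at hx
        obtain ⟨y, hy, rfl⟩ := hx
        simp only [Finset.mem_range]
        exact Nat.lt_succ_of_le (T.le_max' y hy)
      calc T.card = (T.image Fin.val).card :=
            (Finset.card_image_of_injective T Fin.val_injective).symm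
        _ ≤ ((a : ℕ) + 1) := le_trans (Finset.card_le_card hsub) (by simp)
    have hca : c ≤ (a : ℕ) := by omega
    have hcn : c < n := lt_of_le_of_lt hca a.isLt
    have hT' : c ≤ (T.erase a).card := by
      rw [Finset.card_erase_of_mem hmem]; omega
    have hfilter : univ.filter (fun j : Fin n => (j : ℕ) < c + 1)
        = insert (⟨c, hcn⟩ : Fin n) (univ.filter (fun j : Fin n => (j : ℕ) < c)) := by
      ext x
      simp only [Finset.mem_filter, Finset.mem_univ, true_and, Finset.mem_insert,
        Fin.ext_iff]
      omega
    rw [hfilter, Finset.sum_insert (by simp)]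
    have h1 := ih (T.erase a) hT'
    have h2 : m ⟨c, hcn⟩ ≤ m a := hm (by exact hca)
    have h3 : ∑ j ∈ T.erase a, m j + m a = ∑ j ∈ T, m j := Finset.sum_erase_add T m hmem
    omega

lemma coldvd {R : Type*} [CommRing R] [IsDomain R] (π : R) (hπ0 : π ≠ 0)
    {n : ℕ} (g : Fin n → Polynomial R)
    (hmonic : ∀ k, (g k).Monic) (hdeg : ∀ k, 1 ≤ (g k).natDegree)
    (hsort : Monotone fun k => (g k).natDegree)
    (hX : ∀ k, C π ∣ (g k - X ^ (g k).natDegree)) :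
    ∀ p q, π ^ (n - 1 - (q.1 : ℕ)) ∣ resMatrix g p q := by
  classical
  set m : Fin n → ℕ := fun k => (g k).natDegree with hm
  -- choose h
  have hh : ∀ k, ∃ h : Polynomial R, g k = X ^ m k + Polynomial.C π * h ∧ h.natDegree ≤ m k - 1 := by
    intro k
    obtain ⟨h, hhk⟩ := hX k
    have hmk : m k = (g k).natDegree := rfl
    refine ⟨h, by rw [hmk, ← hhk]; ring, ?_⟩
    by_cases h0 : h = 0
    · simp [h0]
    have hπC : (Polynomial.C π : Polynomial R) ≠ 0 := by
      simpa using hπ0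
    have hne : g k - X ^ (g k).natDegree ≠ 0 := by
      rw [hhk]; exact mul_ne_zero hπC h0
    have hdlt : (g k - X ^ (g k).natDegree).natDegree < (g k).natDegree := by
      rw [Polynomial.natDegree_lt_iff_degree_lt hne]
      rw [← Polynomial.degree_eq_natDegree (hmonic k).ne_zero]
      refine Polynomial.degree_sub_lt ?_ (hmonic k).ne_zero ?_
      · rw [Polynomial.degree_X_pow, Polynomial.degree_eq_natDegree (hmonic k).ne_zero]
      · rw [(hmonic k).leadingCoeff, Polynomial.leadingCoeff_X_pow]
    have hnh : h.natDegree = (g k - X ^ (g k).natDegree).natDegree := by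
      rw [hhk, Polynomial.natDegree_C_mul hπ0]
    have := hdeg k
    omega
  choose h hg hdegh using hh
  intro p q
  rw [resMatrix]
  split
  · set r : ℕ := resPos q - (p.2 : ℕ) with hr
    have hrle : r ≤ resPos q := Nat.sub_le _ _
    set E : Finset (Fin n) := Finset.univ.erase p.1 with hE
    have hcardE : E.card = n - 1 := by
      rw [hE, Finset.card_erase_of_mem (Finset.mem_univ _), Finset.card_univ, Fintype.card_fin]
    have hexp : ∏ j ∈ E, g j =
        ∑ T ∈ E.powerset, (X : Polynomial R) ^ (∑ j ∈ T, m j) *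
          (Polynomial.C (π ^ (E \ T).card) * ∏ j ∈ E \ T, h j) := by
      calc ∏ j ∈ E, g j = ∏ j ∈ E, ((X : Polynomial R) ^ m j + Polynomial.C π * h j) := by
            exact Finset.prod_congr rfl fun j _ => hg j
        _ = ∑ T ∈ E.powerset, (∏ j ∈ T, (X : Polynomial R) ^ m j) *
              ∏ j ∈ E \ T, (Polynomial.C π * h j) := Finset.prod_add _ _ _
        _ = _ := by
            refine Finset.sum_congr rfl fun T _ => ?_
            rw [Finset.prod_pow_eq_pow_sum, Finset.prod_mul_distrib, Finset.prod_const,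
              ← Polynomial.C_pow]
    rw [hexp, Polynomial.finset_sum_coeff]
    apply Finset.dvd_sum
    intro T hT
    rw [Finset.mem_powerset] at hT
    set k : ℕ := (q.1 : ℕ) with hk
    by_cases hcase : n - 1 - k ≤ (E \ T).card
    · -- divisibility by power of π
      rw [mul_comm ((X : Polynomial R) ^ _), Polynomial.coeff_mul_X_pow']
      split
      · rw [Polynomial.coeff_C_mul]
        exact Dvd.dvd.mul_right (pow_dvd_pow π hcase) _
      · exact dvd_zero _
    · -- coefficient vanishes
      push_neg at hcase
      have hle0 : T.card ≤ E.card := Finset.card_le_card hT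
      have hcardT : T.card = E.card - (E \ T).card := by
        rw [Finset.card_sdiff_of_subset hT]; omega
      have hTcard : k + 1 ≤ T.card := by
        have hkn : k < n := q.1.isLt
        omega
      have hrlt : r < ∑ j ∈ T, m j := by
        have h1 : ∑ j ∈ univ.filter (fun j : Fin n => (j : ℕ) < k + 1), m j ≤ ∑ j ∈ T, m j :=
          sum_mono_lower hsort (k + 1) T hTcard
        have h2 : resPos q < ∑ j ∈ univ.filter (fun j : Fin n => (j : ℕ) < k + 1), m j := by
          have hkn : k < n := q.1.isLt
          have hins : univ.filter (fun j : Fin n => (j : ℕ) < k + 1)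
              = insert q.1 (univ.filter (fun j : Fin n => (j : ℕ) < k)) := by
            ext x
            simp only [Finset.mem_filter, Finset.mem_univ, true_and, Finset.mem_insert,
              Fin.ext_iff]
            omega
          have hfeq : univ.filter (fun j : Fin n => j < q.1)
              = univ.filter (fun j : Fin n => (j : ℕ) < k) := by
            exact Finset.filter_congr fun x _ => Iff.rfl
          rw [hins, Finset.sum_insert (by
            simp only [Finset.mem_filter, Finset.mem_univ, true_and]
            omega)]
          have : resPos q = (∑ j ∈ univ.filter (fun j : Fin n => j < q.1), m j) + (q.2 : ℕ) := rfl
          rw [this, hfeq]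
          have hq2 : (q.2 : ℕ) < m q.1 := q.2.isLt
          omega
        omega
      rw [mul_comm ((X : Polynomial R) ^ _), Polynomial.coeff_mul_X_pow']
      rw [if_neg (by omega)]
      exact dvd_zero _
  · exact dvd_zero _

/-- **Linear algebra of the resultant matrix in the case `g_(k) ≡ X^{m_(k)} mod π`:**
with `e' = val_π(Res(g_(1), …, g_(n))) − ∑_{j ∈ [1,n−1]}((n−j)·m_(j) − 1)`:
(a) every row vector `y` with entries divisible by `π^{e'}` has the form `x·A(g_(1),…,g_(n))`;
(b) if `u ≥ e'` and the entries of `x·A(g_(1),…,g_(n))` are divisible by `π^u`, then the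
entries of `x` are divisible by `π^{u−e'}`. -/
theorem resMatrix_solvable_and_dvd_special
    {R : Type*} [CommRing R] [IsDomain R] [IsDiscreteValuationRing R]
    (π : R) (hπ : Irreducible π)
    {n : ℕ} (g : Fin n → Polynomial R)
    (hmonic : ∀ k, (g k).Monic) (hdeg : ∀ k, 1 ≤ (g k).natDegree)
    (hsort : Monotone fun k => (g k).natDegree)
    (hres : genRes g ≠ 0)
    (hX : ∀ k, C π ∣ (g k - X ^ (g k).natDegree))
    (t : ℕ) (ht : π ^ t ∣ genRes g ∧ ¬ π ^ (t + 1) ∣ genRes g)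
    (e' : ℕ)
    (he' : e' = t - ∑ k ∈ Finset.univ.filter (fun k : Fin n => (k : ℕ) + 1 < n),
        ((n - ((k : ℕ) + 1)) * (g k).natDegree - 1)) :
    (∀ y : ((k : Fin n) × Fin ((g k).natDegree)) → R, (∀ i, π ^ e' ∣ y i) →
        ∃ x : ((k : Fin n) × Fin ((g k).natDegree)) → R,
          Matrix.vecMul x (resMatrix g) = y) ∧
    (∀ u : ℕ, e' ≤ u → ∀ x : ((k : Fin n) × Fin ((g k).natDegree)) → R,
        (∀ i, π ^ u ∣ Matrix.vecMul x (resMatrix g) i) →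
        ∀ i, π ^ (u - e') ∣ x i) := by
  classical
  have hπ0 : π ≠ 0 := hπ.ne_zero
  set s : ℕ := ∑ k ∈ Finset.univ.filter (fun k : Fin n => (k : ℕ) + 1 < n),
      ((n - ((k : ℕ) + 1)) * (g k).natDegree - 1) with hs
  set A := resMatrix g with hAdef
  have hgr : genRes g = A.det := rfl
  set d : ((k : Fin n) × Fin ((g k).natDegree)) → ℕ := fun q => n - 1 - (q.1 : ℕ) with hd
  have hcol : ∀ p q, π ^ d q ∣ A p q := coldvd π hπ0 g hmonic hdeg hsort hX
  choose B hB using fun p q => hcol p q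
  have hA : A = Matrix.of B * Matrix.diagonal (fun q => π ^ d q) := by
    ext p q
    rw [Matrix.mul_diagonal]
    exact (hB p q).trans (mul_comm _ _)
  set S : ℕ := ∑ q : ((k : Fin n) × Fin ((g k).natDegree)), d q with hS
  -- card of the filter
  have hcard : (Finset.univ.filter (fun k : Fin n => (k : ℕ) + 1 < n)).card = n - 1 := by
    cases n with
    | zero => simp
    | succ n' =>
      have hneg : (Finset.univ.filter (fun k : Fin (n' + 1) => ¬((k : ℕ) + 1 < n' + 1)))
          = {Fin.last n'} := by
        ext x
        have := x.isLt
        simp only [Finset.mem_filter, Finset.mem_univ, true_and, Finset.mem_singleton,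
          Fin.ext_iff, Fin.val_last]
        omega
      have := Finset.card_filter_add_card_filter_not
        (s := (Finset.univ : Finset (Fin (n' + 1))))
        (p := fun k : Fin (n' + 1) => (k : ℕ) + 1 < n' + 1)
      rw [hneg] at this
      simp only [Finset.card_singleton, Finset.card_univ, Fintype.card_fin] at this
      omega
  have hSsum : S = s + (n - 1) := by
    have h0 : S = ∑ k : Fin n, (g k).natDegree * (n - 1 - (k : ℕ)) := by
      rw [hS, ← Finset.univ_sigma_univ, Finset.sum_sigma]
      refine Finset.sum_congr rfl fun k _ => ?_
      simp [hd, Finset.sum_const, Finset.card_univ, mul_comm]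
    rw [h0, ← Finset.sum_filter_add_sum_filter_not Finset.univ
      (fun k : Fin n => (k : ℕ) + 1 < n)]
    have hneg : ∑ k ∈ Finset.univ.filter (fun k : Fin n => ¬((k : ℕ) + 1 < n)),
        (g k).natDegree * (n - 1 - (k : ℕ)) = 0 := by
      refine Finset.sum_eq_zero fun k hk => ?_
      simp only [Finset.mem_filter, Finset.mem_univ, true_and] at hk
      have : n - 1 - (k : ℕ) = 0 := by omega
      simp [this]
    rw [hneg, add_zero]
    have hpos : ∑ k ∈ Finset.univ.filter (fun k : Fin n => (k : ℕ) + 1 < n),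
        (g k).natDegree * (n - 1 - (k : ℕ))
        = ∑ k ∈ Finset.univ.filter (fun k : Fin n => (k : ℕ) + 1 < n),
          (((n - ((k : ℕ) + 1)) * (g k).natDegree - 1) + 1) := by
      refine Finset.sum_congr rfl fun k hk => ?_
      simp only [Finset.mem_filter, Finset.mem_univ, true_and] at hk
      have h1 := hdeg k
      have h2 : 1 ≤ n - 1 - (k : ℕ) := by omega
      have h3 : 1 ≤ (g k).natDegree * (n - 1 - (k : ℕ)) := Nat.mul_le_mul h1 h2
      have h4 : (n - ((k : ℕ) + 1)) * (g k).natDegree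
          = (g k).natDegree * (n - 1 - (k : ℕ)) := by
        rw [mul_comm]
        congr 1
        omega
      omega
    rw [hpos, Finset.sum_add_distrib, Finset.sum_const, hcard, hs]
    simp
  have hdet : A.det = (Matrix.of B).det * π ^ S := by
    rw [hA, Matrix.det_mul, Matrix.det_diagonal, Finset.prod_pow_eq_pow_sum]
  have hts : s ≤ t := by
    by_contra hlt
    apply ht.2
    rw [hgr, hdet]
    exact Dvd.dvd.mul_left (pow_dvd_pow π (by omega : t + 1 ≤ S)) _
  have hte : t = s + e' := by omega
  obtain ⟨v, hv⟩ := ht.1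
  have hvu : IsUnit v := by
    by_contra hnv
    apply ht.2
    have hmem : v ∈ IsLocalRing.maximalIdeal R := (IsLocalRing.mem_maximalIdeal v).mpr hnv
    rw [hπ.maximalIdeal_eq, Ideal.mem_span_singleton] at hmem
    obtain ⟨w, rfl⟩ := hmem
    exact ⟨w, by rw [hv]; ring⟩
  -- adjugate divisibility
  have hadjfac : Matrix.adjugate A
      = Matrix.diagonal (fun q => ∏ r ∈ Finset.univ.erase q, π ^ d r)
        * Matrix.adjugate (Matrix.of B) := by
    rw [hA, Matrix.adjugate_mul_distrib, Matrix.adjugate_diagonal]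
  have hadj : ∀ p q, π ^ s ∣ Matrix.adjugate A p q := by
    intro p q
    rw [hadjfac, Matrix.diagonal_mul, Finset.prod_pow_eq_pow_sum]
    have hsum : (∑ r ∈ Finset.univ.erase p, d r) + d p = S :=
      Finset.sum_erase_add Finset.univ d (Finset.mem_univ p)
    have hdp : d p ≤ n - 1 := Nat.sub_le _ _
    exact Dvd.dvd.mul_right (pow_dvd_pow π (by omega)) _
  choose Cm hCm using fun p q => hadj p q
  have hCA : Matrix.of Cm * A = Matrix.diagonal (fun _ => π ^ e' * v) := by
    ext p q
    refine mul_left_cancel₀ (pow_ne_zero s hπ0) ?_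
    have h2 : (Matrix.adjugate A * A) p q = A.det * (1 : Matrix _ _ R) p q := by
      rw [Matrix.adjugate_mul]
      simp
    calc π ^ s * ((Matrix.of Cm * A) p q)
        = ∑ r, (π ^ s * Cm p r) * A r q := by
          simp [Matrix.mul_apply, Finset.mul_sum, mul_assoc]
      _ = (Matrix.adjugate A * A) p q := by
          rw [Matrix.mul_apply]
          exact Finset.sum_congr rfl fun r _ => by rw [← hCm p r]
      _ = π ^ s * Matrix.diagonal (fun _ => π ^ e' * v) p q := by
          rw [h2, ← hgr, hv, hte]
          by_cases hpq : p = q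
          · subst hpq
            rw [Matrix.one_apply_eq, Matrix.diagonal_apply_eq, pow_add]
            ring
          · rw [Matrix.one_apply_ne hpq, Matrix.diagonal_apply_ne _ hpq]
            ring
  have hAC : A * Matrix.of Cm = Matrix.diagonal (fun _ => π ^ e' * v) := by
    ext p q
    refine mul_left_cancel₀ (pow_ne_zero s hπ0) ?_
    have h2 : (A * Matrix.adjugate A) p q = A.det * (1 : Matrix _ _ R) p q := by
      rw [Matrix.mul_adjugate]
      simp
    calc π ^ s * ((A * Matrix.of Cm) p q)
        = ∑ r, A p r * (π ^ s * Cm r q) := by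
          simp [Matrix.mul_apply, Finset.mul_sum]
          exact Finset.sum_congr rfl fun r _ => by ring
      _ = (A * Matrix.adjugate A) p q := by
          rw [Matrix.mul_apply]
          exact Finset.sum_congr rfl fun r _ => by rw [← hCm r q]
      _ = π ^ s * Matrix.diagonal (fun _ => π ^ e' * v) p q := by
          rw [h2, ← hgr, hv, hte]
          by_cases hpq : p = q
          · subst hpq
            rw [Matrix.one_apply_eq, Matrix.diagonal_apply_eq, pow_add]
            ring
          · rw [Matrix.one_apply_ne hpq, Matrix.diagonal_apply_ne _ hpq]
            ring
  obtain ⟨vu, hvu'⟩ := hvu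
  constructor
  · -- part (a)
    intro y hy
    choose z hz using fun i => hy i
    refine ⟨(↑vu⁻¹ : R) • Matrix.vecMul z (Matrix.of Cm), ?_⟩
    funext i
    rw [Matrix.smul_vecMul, Matrix.vecMul_vecMul, hCA]
    have hinv : (↑vu⁻¹ : R) * ↑vu = 1 := Units.inv_mul vu
    simp only [Pi.smul_apply, Matrix.vecMul_diagonal, smul_eq_mul]
    rw [hz i, ← hvu']
    linear_combination (π ^ e' * z i) * hinv
  · -- part (b)
    intro u hu x hx i
    have hxc : π ^ u ∣ Matrix.vecMul (Matrix.vecMul x A) (Matrix.of Cm) i := by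
      rw [Matrix.vecMul]
      exact Finset.dvd_sum fun p _ => Dvd.dvd.mul_right (hx p) _
    rw [Matrix.vecMul_vecMul, hAC, Matrix.vecMul_diagonal] at hxc
    have hxc2 : π ^ e' * π ^ (u - e') ∣ π ^ e' * (v * x i) := by
      rw [← pow_add]
      have : e' + (u - e') = u := by omega
      rw [this]
      have : x i * (π ^ e' * v) = π ^ e' * (v * x i) := by ring
      rwa [this] at hxc
    have h3 : π ^ (u - e') ∣ v * x i :=
      (mul_dvd_mul_iff_left (pow_ne_zero e' hπ0)).mp hxc2
    have h4 : x i = (↑vu⁻¹ : R) * (v * x i) := by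
      rw [← hvu', ← mul_assoc, Units.inv_mul, one_mul]
    rw [h4]
    exact h3.mul_left _
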